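/- Let p(t) = 8(1+t²b²)⁴ t³ a² A² + 8(1+t²a²)⁴ t³ b² B² + (1+t²a²)(1+t²b²) q(t), where a, b, A, B are real numbers with a·b ≠ 0, a² ≠ b², and q is a polynomial with real coefficients. If p(t) = 0 for all real t, then A = 0 and B = 0. -/

import Mathlib

open Polynomial Complex

theorem polynomial_identity_forces_vanishing (a b A B : ℝ) (q : Polynomial ℝ)
    (hab : a * b ≠ 0) (hsq : a^2 ≠ b^2)
    (hp : ∀ t : ℝ,
      8*(1 + t^2*b^2)^4 * t^3 * a^2 * A^2 + 8*(1 + t^2*a^2)^4 * t^3 * b^2 * B^2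
        + (1 + t^2*a^2)*(1 + t^2*b^2) * q.eval t = 0) :
    A = 0 ∧ B = 0 := by
  have ha : a ≠ 0 := fun h => hab (by simp [h])
  have hb : b ≠ 0 := fun h => hab (by simp [h])
  have haC : (a:ℂ) ≠ 0 := by exact_mod_cast ha
  have hbC : (b:ℂ) ≠ 0 := by exact_mod_cast hb
  have hsqC : (a:ℂ)^2 - (b:ℂ)^2 ≠ 0 := by
    intro h
    apply hsq
    have : ((a^2 - b^2 : ℝ) : ℂ) = 0 := by push_cast; linear_combination h
    have := Complex.ofReal_eq_zero.mp this
    linarith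
  set P : Polynomial ℝ :=
    C 8 * (1 + X^2 * C (b^2))^4 * X^3 * C (a^2) * C (A^2)
      + C 8 * (1 + X^2 * C (a^2))^4 * X^3 * C (b^2) * C (B^2)
      + (1 + X^2 * C (a^2)) * (1 + X^2 * C (b^2)) * q with hPdef
  have hP : P = 0 := by
    apply Polynomial.funext
    intro t
    simpa [hPdef, mul_comm, mul_assoc, mul_left_comm] using hp t
  have key : ∀ z : ℂ,
      8*(1 + z^2*(b:ℂ)^2)^4 * z^3 * (a:ℂ)^2 * (A:ℂ)^2
        + 8*(1 + z^2*(a:ℂ)^2)^4 * z^3 * (b:ℂ)^2 * (B:ℂ)^2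
        + (1 + z^2*(a:ℂ)^2)*(1 + z^2*(b:ℂ)^2) * (Polynomial.aeval z q) = 0 := by
    intro z
    have := congrArg (Polynomial.aeval z) hP
    simp only [hPdef, map_add, map_mul, map_pow, map_one, Polynomial.aeval_C,
      Polynomial.aeval_X, map_zero, Complex.coe_algebraMap] at this
    push_cast at this ⊢
    linear_combination this
  constructor
  · -- evaluate at z = I/a
    have h1 := key (Complex.I / a)
    have hz : 1 + (Complex.I / a)^2 * (a:ℂ)^2 = 0 := by
      field_simp
      simp [Complex.I_sq]
    rw [hz] at h1
    have hfac : (1 + (Complex.I / a)^2 * (b:ℂ)^2) = ((a:ℂ)^2 - (b:ℂ)^2)/(a:ℂ)^2 := by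
      field_simp
      rw [Complex.I_sq]
      ring
    rw [hfac] at h1
    norm_num at h1
    rcases h1 with (h | h) | h
    · exact absurd h hsqC
    · exact absurd h ha
    · exact h
  · have h1 := key (Complex.I / b)
    have hz : 1 + (Complex.I / b)^2 * (b:ℂ)^2 = 0 := by
      field_simp
      simp [Complex.I_sq]
    rw [hz] at h1
    have hfac : (1 + (Complex.I / b)^2 * (a:ℂ)^2) = ((b:ℂ)^2 - (a:ℂ)^2)/(b:ℂ)^2 := by
      field_simp
      rw [Complex.I_sq]
      ring
    rw [hfac] at h1
    norm_num at h1
    rcases h1 with (h | h) | h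
    · exact absurd (by linear_combination -h : (a:ℂ)^2 - (b:ℂ)^2 = 0) hsqC
    · exact absurd h hb
    · exact h
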